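/- Let T_A = Aℤⁿ/qℤⁿ be a discrete weighted torus satisfying the distance condition. If the scalar curvature is non-negative, i.e. R([x]) ≥ 0 for every vertex [x] of T_A, then R([x]) = 0 for every vertex [x]. -/

import Mathlib

open Filter Topology

noncomputable section

namespace PMT

/-- The `i`-th standard unit vector in `ℤⁿ`. -/
def e (n : ℕ) (i : Fin n) : Fin n → ℤ := fun j => if j = i then 1 else 0

/-- The grid graph on `ℤⁿ`: `x ∼ y` iff `‖x − y‖₁ = 1`. -/
def grid (n : ℕ) : SimpleGraph (Fin n → ℤ) where
  Adj x y := (∑ i, |x i - y i|) = 1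
  symm := by
    constructor
    intro x y h
    beta_reduce at h ⊢
    have h' : ∀ i ∈ Finset.univ, |y i - x i| = |x i - y i| :=
      fun i _ => abs_sub_comm _ _
    rw [Finset.sum_congr rfl h']
    exact h
  loopless := by constructor; intro x h; simp at h

/-- The graph Laplacian `Δf(x) = Σ_{y∼x} w(x,y)(f(y)−f(x))` of an integer-valued function. -/
def lap {V : Type*} (G : SimpleGraph V) (w : V → V → ℝ) (f : V → ℤ) (x : V) : ℝ :=
  ∑ᶠ y ∈ {y | G.Adj x y}, w x y * ((f y : ℝ) - (f x : ℝ))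

/-- `f : V → ℤ` is 1-Lipschitz with respect to the combinatorial graph distance. -/
def Lip1 {V : Type*} (G : SimpleGraph V) (f : V → ℤ) : Prop :=
  ∀ x y, |f x - f y| ≤ (G.dist x y : ℤ)

/-- Ollivier curvature of the pair `(x, y)`:
`κ(x,y) = inf {Δf(x) − Δf(y) | f : V → ℤ, f 1-Lipschitz, f(y) = f(x) + 1}`. -/
def kappa {V : Type*} (G : SimpleGraph V) (w : V → V → ℝ) (x y : V) : ℝ :=
  sInf {r | ∃ f : V → ℤ, Lip1 G f ∧ f y = f x + 1 ∧ r = lap G w f x - lap G w f y}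

/-- Scalar curvature `R(x) = Σ_{y∼x} κ(x,y)`. -/
def scal {V : Type*} (G : SimpleGraph V) (w : V → V → ℝ) (x : V) : ℝ :=
  ∑ᶠ y ∈ {y | G.Adj x y}, kappa G w x y

/-- A weighted grid graph `(ℤⁿ, w)`: symmetric weights, positive on edges. -/
structure GridWeight (n : ℕ) where
  w : (Fin n → ℤ) → (Fin n → ℤ) → ℝ
  symm : ∀ x y, w x y = w y x
  pos : ∀ x y, (grid n).Adj x y → 0 < w x y

/-- The quantity `Abs(x)` measuring the distortion from the standard grid graph. -/
def Absf (n : ℕ) (w : (Fin n → ℤ) → (Fin n → ℤ) → ℝ) (x : Fin n → ℤ) : ℝ :=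
  ∑ i, ∑ j, if i ≠ j then
      (|w x (x + e n i) - w (x + e n j) (x + e n j + e n i)| +
       |w x (x + e n i) - w (x - e n j) (x - e n j + e n i)| +
       |w x (x - e n i) - w (x + e n j) (x + e n j - e n i)| +
       |w x (x - e n i) - w (x - e n j) (x - e n j - e n i)|)
    else 0

/-- The `ℓ^∞` norm `‖x‖_∞` of `x ∈ ℤⁿ`, as a natural number. -/
def nInf {n : ℕ} (x : Fin n → ℤ) : ℕ := Finset.univ.sup fun i => (x i).natAbs

/-- The cube `Q_r = {y ∈ ℤⁿ : ‖y‖∞ ≤ r}` as a finset. -/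
def Qr (n r : ℕ) : Finset (Fin n → ℤ) := Finset.Icc (fun _ => -(r : ℤ)) (fun _ => (r : ℤ))

/-- `Σ_{e ∈ E_r} w(e)`: the sum of weights of edges with exactly one endpoint in `Q_r`
(each such edge is counted once, via its endpoint inside `Q_r`). -/
def ErSum (n : ℕ) (w : (Fin n → ℤ) → (Fin n → ℤ) → ℝ) (r : ℕ) : ℝ :=
  ∑ x ∈ Qr n r, ∑ i,
    ((if x + e n i ∉ Qr n r then w x (x + e n i) else 0) +
     (if x - e n i ∉ Qr n r then w x (x - e n i) else 0))

/-- `Σ_{τ ∈ Ẽ_r} w(τ)`: the sum of weights of edges joining the sphere `S_{r+1}` to the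
sphere `S_{r+2}` (each such edge is counted once, via its endpoint in `S_{r+1}`). -/
def TErSum (n : ℕ) (w : (Fin n → ℤ) → (Fin n → ℤ) → ℝ) (r : ℕ) : ℝ :=
  ∑ x ∈ Qr n (r + 1), if nInf x = r + 1 then
      (∑ i, ((if nInf (x + e n i) = r + 2 then w x (x + e n i) else 0) +
             (if nInf (x - e n i) = r + 2 then w x (x - e n i) else 0)))
    else 0

/-- The weighted grid graph `(ℤⁿ, w)` is asymptotically flat: there is `p > n` with
`w = 1 + o(1)`, `Abs(x) = O(‖x‖∞^{−p})` and `|R(x)| = O(‖x‖∞^{−p})` as `‖x‖∞ → ∞`. -/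
def AsympFlatGrid (n : ℕ) (W : GridWeight n) : Prop :=
  ∃ p : ℝ, (n : ℝ) < p ∧
    (∀ ε : ℝ, 0 < ε → ∃ M : ℕ, ∀ x y, (grid n).Adj x y → M ≤ nInf x → |W.w x y - 1| ≤ ε) ∧
    (∃ C : ℝ, ∃ M : ℕ, 0 < M ∧ ∀ x, M ≤ nInf x → Absf n W.w x ≤ C * (nInf x : ℝ) ^ (-p)) ∧
    (∃ C : ℝ, ∃ M : ℕ, 0 < M ∧ ∀ x, M ≤ nInf x → |scal (grid n) W.w x| ≤ C * (nInf x : ℝ) ^ (-p))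


/-- The data of a discrete torus `T_A = Aℤⁿ/qℤⁿ`: an integer matrix `A` with
`det A ≠ 0`, and `q = k·|det A|` for some `k ∈ ℤ₊`. We parametrize the lattice `Aℤⁿ` by
`ℤⁿ` via `z ↦ Az` (so the vertex `x = Az` corresponds to `z`, and `α_i = A e_i`
corresponds to `e_i`). -/
structure TorusData (n : ℕ) where
  A : Matrix (Fin n) (Fin n) ℤ
  hdet : A.det ≠ 0
  k : ℕ
  hk : 0 < k

/-- `q = k·|det A|`. -/
def TorusData.q {n : ℕ} (T : TorusData n) : ℕ := T.k * T.A.det.natAbs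

/-- The subgroup `{z ∈ ℤⁿ | Az ∈ qℤⁿ}` of `ℤⁿ`; under `z ↦ Az` it corresponds to the
sublattice `qℤⁿ ⊆ Aℤⁿ`. -/
def TorusData.lat {n : ℕ} (T : TorusData n) : AddSubgroup (Fin n → ℤ) where
  carrier := {z | ∀ j, ((T.q : ℤ)) ∣ T.A.mulVec z j}
  zero_mem' := by intro j; simp [Matrix.mulVec_zero]
  add_mem' := by
    intro a b ha hb j
    rw [Matrix.mulVec_add]
    exact dvd_add (ha j) (hb j)
  neg_mem' := by
    intro a ha j
    rw [Matrix.mulVec_neg]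
    exact dvd_neg.mpr (ha j)

/-- The vertex set of the discrete torus `T_A = Aℤⁿ/qℤⁿ` (in the `z`-parametrization). -/
def TorusV {n : ℕ} (T : TorusData n) : Type := (Fin n → ℤ) ⧸ T.lat

instance {n : ℕ} (T : TorusData n) : AddCommGroup (TorusV T) :=
  QuotientAddGroup.Quotient.addCommGroup T.lat

/-- The quotient map `Aℤⁿ → T_A` (in the `z`-parametrization, `z` stands for `x = Az`). -/
def tmk {n : ℕ} (T : TorusData n) (z : Fin n → ℤ) : TorusV T := QuotientAddGroup.mk z

/-- The graph structure of the discrete torus: `[x] ∼ [y]` iff `x − y ∈ qℤⁿ ± α_i`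
for some `i` (and `[x] ≠ [y]`, so that the graph is simple). -/
def torusG {n : ℕ} (T : TorusData n) : SimpleGraph (TorusV T) where
  Adj a b := a ≠ b ∧ ∃ i : Fin n, b - a = tmk T (e n i) ∨ a - b = tmk T (e n i)
  symm := by
    constructor
    rintro a b ⟨hne, i, h | h⟩
    · exact ⟨hne.symm, i, Or.inr h⟩
    · exact ⟨hne.symm, i, Or.inl h⟩
  loopless := by constructor; rintro a ⟨hne, -⟩; exact hne rfl

/-- The distance condition: every combinatorial ball of radius 2 in the lattice `Aℤⁿ`
embeds isometrically into the torus, i.e. `d(u,v) = d([u],[v])` for all `u, v ∈ B₂(x)`. -/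
def DistCond {n : ℕ} (T : TorusData n) : Prop :=
  ∀ x u v : Fin n → ℤ, (grid n).dist x u ≤ 2 → (grid n).dist x v ≤ 2 →
    (grid n).dist u v = (torusG T).dist (tmk T u) (tmk T v)

/-! ### Auxiliary material -/

section AuxGrid

variable {n : ℕ}

lemma l1_nonneg (u v : Fin n → ℤ) : 0 ≤ ∑ i, |u i - v i| :=
  Finset.sum_nonneg fun i _ => abs_nonneg _

lemma l1_eq_zero {u v : Fin n → ℤ} (h : ∑ i, |u i - v i| = 0) : u = v := by
  funext i
  have := (Finset.sum_eq_zero_iff_of_nonneg (fun i _ => abs_nonneg (u i - v i))).mp h i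
    (Finset.mem_univ i)
  have := abs_eq_zero.mp this
  linarith

lemma exists_grid_walk : ∀ (N : ℕ) (u v : Fin n → ℤ), (∑ i, |u i - v i|) = N →
    ∃ p : (grid n).Walk u v, p.length = N := by
  intro N
  induction N with
  | zero =>
    intro u v h
    obtain rfl := l1_eq_zero h
    exact ⟨SimpleGraph.Walk.nil, rfl⟩
  | succ m ih =>
    intro u v h
    have hex : ∃ i, u i ≠ v i := by
      by_contra hc
      push_neg at hc
      obtain rfl : u = v := funext hc
      simp at h
      omega
    obtain ⟨i, hi⟩ := hex
    obtain ⟨s, hsign⟩ : ∃ s : ℤ, (v i - u i > 0 ∧ s = 1) ∨ (v i - u i < 0 ∧ s = -1) := by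
      rcases lt_trichotomy (v i - u i) 0 with hlt | heq | hgt
      · exact ⟨-1, Or.inr ⟨hlt, rfl⟩⟩
      · exact absurd (by linarith : u i = v i) hi
      · exact ⟨1, Or.inl ⟨hgt, rfl⟩⟩
    set u' : Fin n → ℤ := Function.update u i (u i + s) with hu'
    have hadj : (grid n).Adj u u' := by
      show (∑ j, |u j - u' j|) = 1
      rw [Finset.sum_eq_single_of_mem i (Finset.mem_univ i)]
      · rw [hu', Function.update_self]
        rcases hsign with ⟨_, rfl⟩ | ⟨_, rfl⟩ <;> simp
      · intro j _ hj
        rw [hu', Function.update_of_ne hj, sub_self, abs_zero]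
    have hsum : (∑ j, |u' j - v j|) = m := by
      have hsplit : ∀ w : Fin n → ℤ, (∑ j, |w j - v j|) =
          |w i - v i| + ∑ j ∈ Finset.univ.erase i, |w j - v j| := by
        intro w
        rw [← Finset.add_sum_erase _ _ (Finset.mem_univ i)]
      have h1 := hsplit u
      have h2 := hsplit u'
      have heq : ∀ j ∈ Finset.univ.erase i, |u' j - v j| = |u j - v j| := by
        intro j hj
        rw [hu', Function.update_of_ne (Finset.ne_of_mem_erase hj)]
      rw [Finset.sum_congr rfl heq] at h2
      have hii : |u' i - v i| = |u i - v i| - 1 := by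
        rw [hu', Function.update_self]
        rcases hsign with ⟨hpos, rfl⟩ | ⟨hneg, rfl⟩
        · rw [abs_of_nonpos (by omega : u i + 1 - v i ≤ 0), abs_of_neg (by omega : u i - v i < 0)]
          ring
        · rw [abs_of_nonneg (by omega : (0:ℤ) ≤ u i + -1 - v i),
            abs_of_pos (by omega : (0:ℤ) < u i - v i)]
          ring
      have : (∑ j, |u' j - v j|) = (m : ℤ) := by
        rw [h2, hii]
        omega
      exact_mod_cast this
    obtain ⟨p, hp⟩ := ih u' v hsum
    exact ⟨SimpleGraph.Walk.cons hadj p, by simp [hp]⟩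

lemma l1_le_length {v : Fin n → ℤ} : ∀ {u : Fin n → ℤ} (p : (grid n).Walk u v),
    (∑ i, |u i - v i|) ≤ (p.length : ℤ) := by
  intro u p
  induction p with
  | nil => simp
  | @cons a b c hab p ih =>
    have htri : (∑ i, |a i - c i|) ≤ (∑ i, |a i - b i|) + ∑ i, |b i - c i| := by
      rw [← Finset.sum_add_distrib]
      exact Finset.sum_le_sum fun i _ => abs_sub_le _ _ _
    have hab1 : (∑ i, |a i - b i|) = 1 := hab
    simp only [SimpleGraph.Walk.length_cons]
    push_cast
    linarith

lemma grid_reachable (u v : Fin n → ℤ) : (grid n).Reachable u v := by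
  obtain ⟨p, _⟩ := exists_grid_walk (∑ i, |u i - v i|).toNat u v
    (Int.toNat_of_nonneg (l1_nonneg u v)).symm
  exact ⟨p⟩

lemma gridDist (u v : Fin n → ℤ) : ((grid n).dist u v : ℤ) = ∑ i, |u i - v i| := by
  obtain ⟨N, hN⟩ : ∃ N : ℕ, (∑ i, |u i - v i|) = N :=
    ⟨(∑ i, |u i - v i|).toNat, (Int.toNat_of_nonneg (l1_nonneg u v)).symm⟩
  obtain ⟨p, hp⟩ := exists_grid_walk N u v hN
  have hle : (grid n).dist u v ≤ N := hp ▸ SimpleGraph.dist_le p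
  obtain ⟨q, hq⟩ := (SimpleGraph.Walk.reachable p).exists_walk_length_eq_dist
  have hge := l1_le_length q
  rw [hq] at hge
  omega

lemma grid_adj_iff {u v : Fin n → ℤ} :
    (grid n).Adj u v ↔ ∃ i, v = u + e n i ∨ v = u - e n i := by
  constructor
  · intro h
    have h1 : (∑ i, |u i - v i|) = 1 := h
    have hex : ∃ i, u i ≠ v i := by
      by_contra hc
      push_neg at hc
      obtain rfl : u = v := funext hc
      simp at h1
    obtain ⟨i, hi⟩ := hex
    rw [← Finset.add_sum_erase _ _ (Finset.mem_univ i)] at h1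
    have h0 : (0:ℤ) ≤ ∑ j ∈ Finset.univ.erase i, |u j - v j| :=
      Finset.sum_nonneg fun j _ => abs_nonneg _
    have hi1 : (1:ℤ) ≤ |u i - v i| := abs_pos.mpr (sub_ne_zero.mpr hi)
    have hz : (∑ j ∈ Finset.univ.erase i, |u j - v j|) = 0 := by omega
    have hii : |u i - v i| = 1 := by omega
    have hothers : ∀ j, j ≠ i → v j = u j := by
      intro j hj
      have hjz := (Finset.sum_eq_zero_iff_of_nonneg fun j _ => abs_nonneg _).mp hz j
        (Finset.mem_erase.mpr ⟨hj, Finset.mem_univ j⟩)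
      have := abs_eq_zero.mp hjz
      linarith
    rcases (abs_eq (by norm_num : (0:ℤ) ≤ 1)).mp hii with hc | hc
    · refine ⟨i, Or.inr ?_⟩
      funext j
      by_cases hj : j = i
      · subst hj; simp [e]; linarith
      · simp [e, hj, hothers j hj]
    · refine ⟨i, Or.inl ?_⟩
      funext j
      by_cases hj : j = i
      · subst hj; simp [e]; linarith
      · simp [e, hj, hothers j hj]
  · rintro ⟨i, rfl | rfl⟩ <;>
    · show (∑ j, |_|) = 1
      rw [Finset.sum_eq_single_of_mem i (Finset.mem_univ i)]
      · simp [e]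
      · intro j _ hj; simp [e, hj]

/-- signed unit vectors -/
def pm (n : ℕ) (p : Fin n × Bool) : Fin n → ℤ :=
  fun k => (if p.2 then 1 else -1) * e n p.1 k

lemma pm_true (j : Fin n) : pm n (j, true) = e n j := by
  funext k; simp [pm]

lemma pm_false (j : Fin n) : pm n (j, false) = -e n j := by
  funext k; simp [pm]

lemma sum_abs_e (i : Fin n) : (∑ k, |e n i k|) = 1 := by
  rw [Finset.sum_eq_single_of_mem i (Finset.mem_univ i)]
  · simp [e]
  · intro j _ hj; simp [e, hj]

lemma sum_abs_pm (p : Fin n × Bool) : (∑ k, |pm n p k|) = 1 := by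
  have : ∀ k, |pm n p k| = |e n p.1 k| := by
    intro k
    rcases p with ⟨j, s⟩
    cases s <;> simp [pm]
  rw [Finset.sum_congr rfl fun k _ => this k, sum_abs_e]

lemma pm_inj : Function.Injective (pm n) := by
  rintro ⟨j, s⟩ ⟨j', s'⟩ h
  have hj := congrFun h j
  have hjj : e n j j = 1 := by simp [e]
  by_cases hjeq : j = j'
  · subst hjeq
    simp only [pm, hjj, mul_one] at hj
    cases s <;> cases s' <;> simp_all
  · have : e n j' j = 0 := by simp [e, hjeq]
    simp only [pm, hjj, this, mul_one, mul_zero] at hj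
    cases s <;> simp at hj

end AuxGrid

section AuxTorus

variable {n : ℕ} (T : TorusData n)

lemma q_pos : 0 < T.q :=
  Nat.mul_pos T.hk (Int.natAbs_pos.mpr T.hdet)

lemma mem_lat_of_dvd {z : Fin n → ℤ} (h : ∀ j, (T.q : ℤ) ∣ z j) : z ∈ T.lat := by
  intro j
  show (T.q : ℤ) ∣ ∑ k, T.A j k * z k
  exact Finset.dvd_sum fun k _ => (h k).mul_left _

lemma tmk_add (u v : Fin n → ℤ) : tmk T (u + v) = tmk T u + tmk T v := rfl

lemma tmk_neg (u : Fin n → ℤ) : tmk T (-u) = -tmk T u := rfl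

lemma tmk_sub (u v : Fin n → ℤ) : tmk T (u - v) = tmk T u - tmk T v := by
  rw [sub_eq_add_neg, tmk_add, tmk_neg, sub_eq_add_neg]

lemma tmk_surjective : Function.Surjective (tmk T) :=
  fun a => QuotientAddGroup.induction_on a fun z => ⟨z, rfl⟩

lemma tmk_eq_iff {u v : Fin n → ℤ} : tmk T u = tmk T v ↔ u - v ∈ T.lat :=
  QuotientAddGroup.eq_iff_sub_mem

instance : Finite (TorusV T) := by
  have hq : 0 < (T.q : ℤ) := by exact_mod_cast q_pos T
  have hsurj : Function.Surjective
      (fun v : Fin n → Fin T.q => tmk T fun j => ((v j : ℕ) : ℤ)) := by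
    intro a
    obtain ⟨z, rfl⟩ := tmk_surjective T a
    refine ⟨fun j => ⟨(z j % (T.q : ℤ)).toNat, ?_⟩, ?_⟩
    · have h1 := Int.emod_nonneg (z j) hq.ne'
      have h2 := Int.emod_lt_of_pos (z j) hq
      omega
    · refine (tmk_eq_iff T).mpr (mem_lat_of_dvd T fun j => ?_)
      have h1 := Int.emod_nonneg (z j) hq.ne'
      have hcast : (((z j % (T.q : ℤ)).toNat : ℕ) : ℤ) = z j % (T.q : ℤ) :=
        Int.toNat_of_nonneg h1
      simp only [Pi.sub_apply]
      rw [hcast, Int.emod_def]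
      exact ⟨-(z j / (T.q : ℤ)), by ring⟩
  exact Finite.of_surjective _ hsurj

instance : Nonempty (TorusV T) := ⟨tmk T 0⟩

end AuxTorus

section AuxTorusDist

variable {n : ℕ} {T : TorusData n}

/-- Distance in the torus between images of points near a common basepoint. -/
lemma torus_dist_eq (hd : DistCond T) {x u v : Fin n → ℤ}
    (hu : (∑ i, |x i - u i|) ≤ 2) (hv : (∑ i, |x i - v i|) ≤ 2) :
    (((torusG T).dist (tmk T u) (tmk T v) : ℕ) : ℤ) = ∑ i, |u i - v i| := by
  have h1 : (grid n).dist x u ≤ 2 := by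
    have := gridDist x u; omega
  have h2 : (grid n).dist x v ≤ 2 := by
    have := gridDist x v; omega
  rw [← hd x u v h1 h2, gridDist]

lemma tmk_ne (hd : DistCond T) {x u v : Fin n → ℤ}
    (hu : (∑ i, |x i - u i|) ≤ 2) (hv : (∑ i, |x i - v i|) ≤ 2) (huv : u ≠ v) :
    tmk T u ≠ tmk T v := by
  intro hEq
  have := torus_dist_eq hd hu hv
  rw [hEq, SimpleGraph.dist_self] at this
  exact huv (l1_eq_zero this.symm)

lemma l1_self (x : Fin n → ℤ) : (∑ i, |x i - x i|) = 0 := by simp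

lemma l1_add_pm (x : Fin n → ℤ) (p : Fin n × Bool) :
    (∑ k, |x k - (x + pm n p) k|) = 1 := by
  have : ∀ k, |x k - (x + pm n p) k| = |pm n p k| := by
    intro k; simp [abs_sub_comm]
  rw [Finset.sum_congr rfl fun k _ => this k, sum_abs_pm]

lemma nbr_inj (hd : DistCond T) (x : Fin n → ℤ) :
    Function.Injective (fun p : Fin n × Bool => tmk T (x + pm n p)) := by
  intro p p' h
  by_contra hne
  have hxx : x + pm n p ≠ x + pm n p' := by
    intro hc
    exact hne (pm_inj (by rwa [add_right_inj] at hc))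
  exact tmk_ne hd (by rw [l1_add_pm]; norm_num) (by rw [l1_add_pm]; norm_num) hxx h

lemma adj_nbr (hd : DistCond T) (x : Fin n → ℤ) (p : Fin n × Bool) :
    (torusG T).Adj (tmk T x) (tmk T (x + pm n p)) := by
  constructor
  · apply tmk_ne hd (by rw [l1_self]; norm_num) (by rw [l1_add_pm]; norm_num)
    intro hc
    have := congrFun hc p.1
    rcases p with ⟨j, s⟩
    cases s <;> simp [pm, e] at this
  · refine ⟨p.1, ?_⟩
    rcases p with ⟨j, s⟩
    cases s
    · right
      rw [pm_false, ← tmk_sub]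
      congr 1
      funext k; simp
    · left
      rw [pm_true, ← tmk_sub]
      congr 1
      funext k; simp

lemma nbhd_eq (hd : DistCond T) (x : Fin n → ℤ) :
    {b | (torusG T).Adj (tmk T x) b} =
      Set.range (fun p : Fin n × Bool => tmk T (x + pm n p)) := by
  ext b
  constructor
  · rintro ⟨hne, i, h | h⟩
    · refine ⟨(i, true), ?_⟩
      simp only [pm_true, tmk_add]
      rw [← h]; abel
    · refine ⟨(i, false), ?_⟩
      simp only [pm_false, tmk_add, tmk_neg]
      rw [← h]; abel
  · rintro ⟨p, rfl⟩
    exact adj_nbr hd x p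

lemma torus_connected (hd : DistCond T) : (torusG T).Connected := by
  rw [SimpleGraph.connected_iff]
  refine ⟨?_, inferInstance⟩
  intro a b
  obtain ⟨z, rfl⟩ := tmk_surjective T a
  obtain ⟨z', rfl⟩ := tmk_surjective T b
  obtain ⟨p, -⟩ := exists_grid_walk (∑ i, |z i - z' i|).toNat z z'
    (Int.toNat_of_nonneg (l1_nonneg z z')).symm
  clear hd
  induction p with
  | nil => exact SimpleGraph.Reachable.refl _
  | @cons a b c hab p ih =>
    refine SimpleGraph.Reachable.trans ?_ ih
    obtain ⟨i, rfl | rfl⟩ := grid_adj_iff.mp hab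
    · by_cases hEq : tmk T a = tmk T (a + e n i)
      · rw [hEq]
      · exact SimpleGraph.Adj.reachable
          ⟨hEq, i, Or.inl (by rw [← tmk_sub]; congr 1; funext k; simp)⟩
    · by_cases hEq : tmk T a = tmk T (a - e n i)
      · rw [hEq]
      · exact SimpleGraph.Adj.reachable
          ⟨hEq, i, Or.inr (by rw [← tmk_sub]; congr 1; funext k; simp)⟩

end AuxTorusDist

section AuxLap

variable {n : ℕ} {T : TorusData n}

lemma lap_eq_sum (hd : DistCond T) (w : TorusV T → TorusV T → ℝ) (f : TorusV T → ℤ)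
    (x : Fin n → ℤ) :
    lap (torusG T) w f (tmk T x) =
      ∑ p : Fin n × Bool, w (tmk T x) (tmk T (x + pm n p)) *
        ((f (tmk T (x + pm n p)) : ℝ) - (f (tmk T x) : ℝ)) := by
  rw [lap, nbhd_eq hd, finsum_mem_range (nbr_inj hd x), finsum_eq_sum_of_fintype]

lemma scal_eq_sum (hd : DistCond T) (w : TorusV T → TorusV T → ℝ) (x : Fin n → ℤ) :
    scal (torusG T) w (tmk T x) =
      ∑ p : Fin n × Bool, kappa (torusG T) w (tmk T x) (tmk T (x + pm n p)) := by
  rw [scal, nbhd_eq hd, finsum_mem_range (nbr_inj hd x), finsum_eq_sum_of_fintype]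

variable (wT : TorusV T → TorusV T → ℝ)

/-- total weight at a vertex (parametrized by a representative) -/
def Wb (x : Fin n → ℤ) : ℝ := ∑ p : Fin n × Bool, wT (tmk T x) (tmk T (x + pm n p))

lemma abs_lap_le (hd : DistCond T) (hpos : ∀ a b, (torusG T).Adj a b → 0 < wT a b)
    {f : TorusV T → ℤ} (hf : Lip1 (torusG T) f) (x : Fin n → ℤ) :
    |lap (torusG T) wT f (tmk T x)| ≤ Wb wT x := by
  rw [lap_eq_sum hd]
  refine (Finset.abs_sum_le_sum_abs _ _).trans ?_
  apply Finset.sum_le_sum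
  intro p _
  have hadj := adj_nbr hd x p
  have hw := hpos _ _ hadj
  have hdist1 : (torusG T).dist (tmk T x) (tmk T (x + pm n p)) = 1 :=
    SimpleGraph.dist_eq_one_iff_adj.mpr hadj
  have hlip := hf (tmk T x) (tmk T (x + pm n p))
  rw [hdist1] at hlip
  have habs : |(f (tmk T (x + pm n p)) : ℝ) - (f (tmk T x) : ℝ)| ≤ 1 := by
    rw [abs_sub_comm]
    exact_mod_cast hlip
  rw [abs_mul, abs_of_pos hw]
  calc wT (tmk T x) (tmk T (x + pm n p)) * |(f (tmk T (x + pm n p)) : ℝ) - (f (tmk T x) : ℝ)|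
      ≤ wT (tmk T x) (tmk T (x + pm n p)) * 1 := by
        exact mul_le_mul_of_nonneg_left habs hw.le
    _ = wT (tmk T x) (tmk T (x + pm n p)) := mul_one _

lemma kappa_bddBelow (hd : DistCond T) (hpos : ∀ a b, (torusG T).Adj a b → 0 < wT a b)
    (x y : Fin n → ℤ) :
    -(Wb wT x + Wb wT y) ∈ lowerBounds
      {r | ∃ f : TorusV T → ℤ, Lip1 (torusG T) f ∧ f (tmk T y) = f (tmk T x) + 1 ∧
        r = lap (torusG T) wT f (tmk T x) - lap (torusG T) wT f (tmk T y)} := by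
  rintro r ⟨f, hf, -, rfl⟩
  have h1 := abs_lap_le wT hd hpos hf x
  have h2 := abs_lap_le wT hd hpos hf y
  linarith [(abs_le.mp h1).1, (abs_le.mp h1).2, (abs_le.mp h2).1, (abs_le.mp h2).2]

lemma kappa_le (hd : DistCond T) (hpos : ∀ a b, (torusG T).Adj a b → 0 < wT a b)
    (x y : Fin n → ℤ) {f : TorusV T → ℤ} (hf : Lip1 (torusG T) f)
    (h1 : f (tmk T y) = f (tmk T x) + 1) :
    kappa (torusG T) wT (tmk T x) (tmk T y) ≤
      lap (torusG T) wT f (tmk T x) - lap (torusG T) wT f (tmk T y) :=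
  csInf_le ⟨_, kappa_bddBelow wT hd hpos x y⟩ ⟨f, hf, h1, rfl⟩

lemma lap_neg {V : Type*} [Finite V] (G : SimpleGraph V) (w : V → V → ℝ) (f : V → ℤ)
    (x : V) : lap G w (-f) x = -lap G w f x := by
  rw [lap, lap, ← finsum_mem_neg_distrib _ (Set.toFinite _)]
  apply finsum_mem_congr rfl
  intro y _
  simp only [Pi.neg_apply, Int.cast_neg]
  ring

lemma kappa_symm' {V : Type*} [Finite V] (G : SimpleGraph V) (w : V → V → ℝ) (x y : V) :
    kappa G w x y = kappa G w y x := by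
  have hset : {r | ∃ f : V → ℤ, Lip1 G f ∧ f y = f x + 1 ∧ r = lap G w f x - lap G w f y} =
      {r | ∃ f : V → ℤ, Lip1 G f ∧ f x = f y + 1 ∧ r = lap G w f y - lap G w f x} := by
    ext r
    constructor
    all_goals
      rintro ⟨f, hf, h1, rfl⟩
      refine ⟨-f, ?_, by simp [h1], ?_⟩
      · intro a b
        have h := hf b a
        rw [SimpleGraph.dist_comm] at h
        have he : (-f) a - (-f) b = f b - f a := by simp; ring
        rw [he]
        exact h
      · rw [lap_neg, lap_neg]; ring
  rw [kappa, kappa, hset]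

end AuxLap

section AuxTest

variable {n : ℕ} {T : TorusData n}

/-- representative points of `B₁(x) ∪ B₁(x + eᵢ)` -/
def rep (x : Fin n → ℤ) (i : Fin n) (u : Bool × Option (Fin n × Bool)) : Fin n → ℤ :=
  (if u.1 then x + e n i else x) + u.2.elim 0 (pm n)

lemma l1_shift (x a b : Fin n → ℤ) :
    (∑ k, |x k - (x + a + b) k|) ≤ (∑ k, |a k|) + ∑ k, |b k| := by
  rw [← Finset.sum_add_distrib]
  apply Finset.sum_le_sum
  intro k _
  have h : x k - (x + a + b) k = -(a k + b k) := by simp; ring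
  rw [h, abs_neg]
  exact abs_add_le _ _

lemma l1_x_rep (x : Fin n → ℤ) (i : Fin n) (u : Bool × Option (Fin n × Bool)) :
    (∑ k, |x k - rep x i u k|) ≤ 2 := by
  rcases u with ⟨t, o⟩
  have hrep : rep x i (t, o) = x + (if t then e n i else 0) + o.elim 0 (pm n) := by
    cases t <;> simp [rep]
  have h1 : (∑ k, |(if t then e n i else (0 : Fin n → ℤ)) k|) ≤ 1 := by
    cases t <;> simp [sum_abs_e]
  have h2 : (∑ k, |(o.elim 0 (pm n) : Fin n → ℤ) k|) ≤ 1 := by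
    rcases o with _ | p <;> simp [sum_abs_pm]
  rw [hrep]
  linarith [l1_shift x (if t then e n i else 0) (o.elim 0 (pm n))]

/-- the test function used to bound the Ollivier curvature from above -/
def tf (T : TorusData n) (x : Fin n → ℤ) (i : Fin n) (b : TorusV T) : ℤ :=
  Finset.univ.inf' Finset.univ_nonempty
    (fun u : Bool × Option (Fin n × Bool) =>
      (rep x i u i - x i) + ((torusG T).dist (tmk T (rep x i u)) b : ℤ))

lemma tf_le (x : Fin n → ℤ) (i : Fin n) (u : Bool × Option (Fin n × Bool)) (b : TorusV T) :
    tf T x i b ≤ (rep x i u i - x i) + ((torusG T).dist (tmk T (rep x i u)) b : ℤ) :=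
  Finset.inf'_le _ (Finset.mem_univ u)

lemma tf_apply (hd : DistCond T) (x : Fin n → ℤ) (i : Fin n)
    (u0 : Bool × Option (Fin n × Bool)) :
    tf T x i (tmk T (rep x i u0)) = rep x i u0 i - x i := by
  refine le_antisymm ?_ ?_
  · have := tf_le (T := T) x i u0 (tmk T (rep x i u0))
    rwa [SimpleGraph.dist_self, Nat.cast_zero, add_zero] at this
  · apply Finset.le_inf'
    intro u _
    have hdist := torus_dist_eq hd (l1_x_rep x i u) (l1_x_rep x i u0)
    have hcoord : rep x i u0 i - rep x i u i ≤ ∑ k, |rep x i u k - rep x i u0 k| := by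
      have h1 : rep x i u0 i - rep x i u i ≤ |rep x i u i - rep x i u0 i| := by
        rw [abs_sub_comm]
        exact le_abs_self _
      exact h1.trans (Finset.single_le_sum (f := fun k => |rep x i u k - rep x i u0 k|)
        (fun k _ => abs_nonneg _) (Finset.mem_univ i))
    linarith

lemma tf_lip (hd : DistCond T) (x : Fin n → ℤ) (i : Fin n) :
    Lip1 (torusG T) (tf T x i) := by
  have key : ∀ b c : TorusV T, tf T x i b - tf T x i c ≤ ((torusG T).dist c b : ℤ) := by
    intro b c
    obtain ⟨u, -, hu⟩ := Finset.exists_mem_eq_inf' Finset.univ_nonempty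
      (fun u : Bool × Option (Fin n × Bool) =>
        (rep x i u i - x i) + ((torusG T).dist (tmk T (rep x i u)) c : ℤ))
    have hc : tf T x i c = (rep x i u i - x i) + ((torusG T).dist (tmk T (rep x i u)) c : ℤ) := hu
    have hb := tf_le (T := T) x i u b
    have htri : (torusG T).dist (tmk T (rep x i u)) b ≤
        (torusG T).dist (tmk T (rep x i u)) c + (torusG T).dist c b :=
      (torus_connected hd).dist_triangle
    have htri' : ((torusG T).dist (tmk T (rep x i u)) b : ℤ) ≤
        ((torusG T).dist (tmk T (rep x i u)) c : ℤ) + ((torusG T).dist c b : ℤ) := by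
      exact_mod_cast htri
    linarith
  intro b c
  rw [abs_sub_le_iff]
  constructor
  · rw [SimpleGraph.dist_comm (u := b) (v := c)]
    exact key b c
  · exact key c b

lemma rep_fn (x : Fin n → ℤ) (i : Fin n) : rep x i (false, none) = x := by
  simp [rep]

lemma rep_tn (x : Fin n → ℤ) (i : Fin n) : rep x i (true, none) = x + e n i := by
  simp [rep]

lemma rep_fs (x : Fin n → ℤ) (i : Fin n) (p : Fin n × Bool) :
    rep x i (false, some p) = x + pm n p := by
  simp [rep]

lemma rep_ts (x : Fin n → ℤ) (i : Fin n) (p : Fin n × Bool) :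
    rep x i (true, some p) = (x + e n i) + pm n p := by
  simp [rep]

lemma tf_x (hd : DistCond T) (x : Fin n → ℤ) (i : Fin n) : tf T x i (tmk T x) = 0 := by
  have h := tf_apply hd x i (false, none)
  rw [rep_fn] at h
  rw [h]; ring

lemma tf_xe (hd : DistCond T) (x : Fin n → ℤ) (i : Fin n) :
    tf T x i (tmk T (x + e n i)) = 1 := by
  have h := tf_apply hd x i (true, none)
  rw [rep_tn] at h
  rw [h]
  simp [e]

lemma tf_nb (hd : DistCond T) (x : Fin n → ℤ) (i : Fin n) (p : Fin n × Bool) :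
    tf T x i (tmk T (x + pm n p)) = 0 + pm n p i := by
  have h := tf_apply hd x i (false, some p)
  rw [rep_fs] at h
  rw [h]
  simp

lemma tf_nb' (hd : DistCond T) (x : Fin n → ℤ) (i : Fin n) (p : Fin n × Bool) :
    tf T x i (tmk T ((x + e n i) + pm n p)) = 1 + pm n p i := by
  have h := tf_apply hd x i (true, some p)
  rw [rep_ts] at h
  rw [h]
  simp [e]
  ring

lemma lap_formula (hd : DistCond T) (w : TorusV T → TorusV T → ℝ) {f : TorusV T → ℤ}
    {y : Fin n → ℤ} {i : Fin n} {c : ℤ}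
    (hy : f (tmk T y) = c) (hnb : ∀ p : Fin n × Bool, f (tmk T (y + pm n p)) = c + pm n p i) :
    lap (torusG T) w f (tmk T y) =
      w (tmk T y) (tmk T (y + e n i)) - w (tmk T y) (tmk T (y - e n i)) := by
  rw [lap_eq_sum hd]
  have hterm : ∀ p : Fin n × Bool,
      w (tmk T y) (tmk T (y + pm n p)) * ((f (tmk T (y + pm n p)) : ℝ) - (f (tmk T y) : ℝ)) =
      (if p.1 = i then (if p.2 then w (tmk T y) (tmk T (y + pm n p)) else
        -(w (tmk T y) (tmk T (y + pm n p)))) else 0) := by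
    intro p
    rw [hnb p, hy]
    rcases p with ⟨j, s⟩
    by_cases hj : j = i
    · subst hj
      cases s <;> simp [pm, e] <;> push_cast <;> ring
    · have hj' : ¬(i = j) := fun h => hj h.symm
      cases s <;> simp [pm, e, hj, hj']
  rw [Finset.sum_congr rfl fun p _ => hterm p, Fintype.sum_prod_type]
  simp only [Fintype.sum_bool]
  rw [Finset.sum_add_distrib, Finset.sum_ite_eq' Finset.univ i, Finset.sum_ite_eq' Finset.univ i]
  simp only [Finset.mem_univ, if_true, pm_true, pm_false]
  rw [← sub_eq_add_neg y (e n i)]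
  norm_num
  try ring

lemma kappa_main (hd : DistCond T) (wT : TorusV T → TorusV T → ℝ)
    (hpos : ∀ a b, (torusG T).Adj a b → 0 < wT a b) (a : TorusV T) (i : Fin n) :
    kappa (torusG T) wT a (a + tmk T (e n i)) ≤
      (wT a (a + tmk T (e n i)) - wT a (a - tmk T (e n i))) -
      (wT (a + tmk T (e n i)) ((a + tmk T (e n i)) + tmk T (e n i)) -
       wT (a + tmk T (e n i)) ((a + tmk T (e n i)) - tmk T (e n i))) := by
  obtain ⟨x, rfl⟩ := tmk_surjective T a
  simp only [← tmk_add, ← tmk_sub]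
  have hf := tf_lip hd x i
  have h1 : tf T x i (tmk T (x + e n i)) = tf T x i (tmk T x) + 1 := by
    rw [tf_x hd, tf_xe hd]
    norm_num
  have hlapx : lap (torusG T) wT (tf T x i) (tmk T x) =
      wT (tmk T x) (tmk T (x + e n i)) - wT (tmk T x) (tmk T (x - e n i)) :=
    lap_formula hd wT (tf_x hd x i) (fun p => tf_nb hd x i p)
  have hlapy : lap (torusG T) wT (tf T x i) (tmk T (x + e n i)) =
      wT (tmk T (x + e n i)) (tmk T ((x + e n i) + e n i)) -
      wT (tmk T (x + e n i)) (tmk T ((x + e n i) - e n i)) :=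
    lap_formula hd wT (tf_xe hd x i) (fun p => tf_nb' hd x i p)
  have hk := kappa_le wT hd hpos x (x + e n i) hf h1
  rw [hlapx, hlapy] at hk
  exact hk.trans_eq (by ring)

end AuxTest


/-- a discrete weighted torus satisfying the distance condition with
non-negative scalar curvature is scalar-flat. -/
theorem torus_scalar_flat (n : ℕ) (T : TorusData n)
    (wT : TorusV T → TorusV T → ℝ)
    (hsymm : ∀ a b, wT a b = wT b a)
    (hpos : ∀ a b, (torusG T).Adj a b → 0 < wT a b)
    (hdist : DistCond T)
    (hR : ∀ a : TorusV T, 0 ≤ scal (torusG T) wT a) :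
    ∀ a : TorusV T, scal (torusG T) wT a = 0 := by
  classical
  haveI : Fintype (TorusV T) := Fintype.ofFinite _
  have hkapsum : ∀ i : Fin n,
      (∑ a : TorusV T, kappa (torusG T) wT a (a + tmk T (e n i))) ≤ 0 := by
    intro i
    set g : TorusV T → ℝ := fun a => wT a (a + tmk T (e n i)) - wT a (a - tmk T (e n i))
      with hg
    have hle : (∑ a : TorusV T, kappa (torusG T) wT a (a + tmk T (e n i))) ≤
        ∑ a : TorusV T, (g a - g (a + tmk T (e n i))) := by
      apply Finset.sum_le_sum
      intro a _
      have := kappa_main hdist wT hpos a i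
      simpa [hg] using this
    have hshift : (∑ a : TorusV T, g (a + tmk T (e n i))) = ∑ a : TorusV T, g a :=
      Fintype.sum_equiv (Equiv.addRight (tmk T (e n i))) _ _ (fun a => rfl)
    have hzero : (∑ a : TorusV T, (g a - g (a + tmk T (e n i)))) = 0 := by
      rw [Finset.sum_sub_distrib, hshift, sub_self]
    linarith
  have hscal : ∀ a : TorusV T, scal (torusG T) wT a =
      ∑ p : Fin n × Bool, kappa (torusG T) wT a (a + tmk T (pm n p)) := by
    intro a
    obtain ⟨x, rfl⟩ := tmk_surjective T a
    rw [scal_eq_sum hdist]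
    exact Finset.sum_congr rfl fun p _ => by rw [← tmk_add]
  have hsum : (∑ a : TorusV T, scal (torusG T) wT a) ≤ 0 := by
    calc (∑ a : TorusV T, scal (torusG T) wT a)
        = ∑ a : TorusV T, ∑ p : Fin n × Bool, kappa (torusG T) wT a (a + tmk T (pm n p)) :=
          Finset.sum_congr rfl fun a _ => hscal a
      _ = ∑ p : Fin n × Bool, ∑ a : TorusV T, kappa (torusG T) wT a (a + tmk T (pm n p)) :=
          Finset.sum_comm
      _ ≤ 0 := by
          apply Finset.sum_nonpos
          rintro ⟨i, s⟩ -
          cases s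
          · have h1 : ∀ a : TorusV T,
                kappa (torusG T) wT a (a + tmk T (pm n (i, false))) =
                kappa (torusG T) wT (a - tmk T (e n i))
                  ((a - tmk T (e n i)) + tmk T (e n i)) := by
              intro a
              have e1 : a + tmk T (pm n (i, false)) = a - tmk T (e n i) := by
                rw [pm_false, tmk_neg, sub_eq_add_neg]
              have e2 : (a - tmk T (e n i)) + tmk T (e n i) = a := by abel
              rw [e1, kappa_symm' (torusG T) wT a (a - tmk T (e n i)), e2]
            rw [Finset.sum_congr rfl fun a _ => h1 a]
            have hre : (∑ a : TorusV T,
                kappa (torusG T) wT (a - tmk T (e n i))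
                  ((a - tmk T (e n i)) + tmk T (e n i))) =
                ∑ b : TorusV T, kappa (torusG T) wT b (b + tmk T (e n i)) :=
              Fintype.sum_equiv (Equiv.subRight (tmk T (e n i))) _ _ (fun a => rfl)
            rw [hre]
            exact hkapsum i
          · simp only [pm_true]
            exact hkapsum i
  have hzero : (∑ a : TorusV T, scal (torusG T) wT a) = 0 :=
    le_antisymm hsum (Finset.sum_nonneg fun a _ => hR a)
  intro a
  exact (Finset.sum_eq_zero_iff_of_nonneg fun a _ => hR a).mp hzero a (Finset.mem_univ a)

end PMT
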